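/- For the single-point construction G(z) = N(z)D(z)^{-1} with N(z) = (z-z₁)I + (z₁/(1+z₁))A₁Γ₁^{-1}(I-A₁*)(1+z) and D(z) = (z-z₁)I + (z₁/(1+z₁))Γ₁^{-1}(I-A₁*)(1+z), the group delay matrix at ω₁ satisfies j·G*(e^{jω₁})·(dG(e^{jω₁})/dω) = Γ₁. -/

import Mathlib

open scoped Matrix ComplexOrder

attribute [local instance] Matrix.linftyOpNormedRing Matrix.linftyOpNormedAlgebra

lemma aux_alg (m : ℕ) (z₁ c i : ℂ) (hz0 : z₁ ≠ 0) (A Mv Mi : Matrix (Fin m) (Fin m) ℂ)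
    (hMM : Mv * Mi = 1) :
    ((i * z₁) • (1 : Matrix (Fin m) (Fin m) ℂ) + (c * (i * z₁)) • (A * Mv)) * (z₁⁻¹ • Mi)
      + (z₁ • (A * Mv)) *
        (-((z₁⁻¹ • Mi) * ((i * z₁) • (1 : Matrix (Fin m) (Fin m) ℂ) + (c * (i * z₁)) • Mv)
          * (z₁⁻¹ • Mi)))
    = i • ((1 - A) * Mi) := by
  have hMM2 : ∀ X : Matrix (Fin m) (Fin m) ℂ, Mv * (Mi * X) = X := by
    intro X; rw [← Matrix.mul_assoc, hMM, Matrix.one_mul]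
  simp only [Matrix.add_mul, Matrix.mul_add, Matrix.smul_mul, Matrix.mul_smul, smul_smul,
    Matrix.one_mul, Matrix.mul_one, mul_neg, neg_mul, Matrix.mul_neg, smul_neg,
    Matrix.sub_mul, Matrix.mul_assoc, hMM, hMM2, smul_sub]
  match_scalars <;> field_simp <;> ring

/-- for the single-point construction `G(z) = N(z)D(z)⁻¹`, the group delay
matrix at `ω₁` satisfies `j·G*(e^{jω₁})·(dG(e^{jω₁})/dω) = Γ₁`. -/
theorem stmt6 (m : ℕ) (ω₁ : ℝ) (hω₁ : ω₁ ∈ Set.Ioc (-Real.pi) Real.pi)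
    (z₁ : ℂ) (hz₁ : z₁ = Complex.exp (Complex.I * (ω₁ : ℂ))) (hz₁' : z₁ ≠ -1)
    (A₁ Γ₁ : Matrix (Fin m) (Fin m) ℂ) (hA : A₁ᴴ * A₁ = 1) (hΓ : Γ₁.PosDef)
    (N D : ℂ → Matrix (Fin m) (Fin m) ℂ)
    (hN : ∀ z, N z = (z - z₁) • (1 : Matrix (Fin m) (Fin m) ℂ)
      + (z₁ / (1 + z₁) * (1 + z)) • (A₁ * Γ₁⁻¹ * (1 - A₁ᴴ)))
    (hD : ∀ z, D z = (z - z₁) • (1 : Matrix (Fin m) (Fin m) ℂ)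
      + (z₁ / (1 + z₁) * (1 + z)) • (Γ₁⁻¹ * (1 - A₁ᴴ)))
    (G : ℝ → Matrix (Fin m) (Fin m) ℂ)
    (hG : ∀ ω : ℝ, G ω = N (Complex.exp (Complex.I * (ω : ℂ)))
      * (D (Complex.exp (Complex.I * (ω : ℂ))))⁻¹)
    (hDinv : ∀ᶠ ω in nhds ω₁, IsUnit (D (Complex.exp (Complex.I * (ω : ℂ)))))
    (G' : Matrix (Fin m) (Fin m) ℂ)
    (hG' : ∀ a b : Fin m, HasDerivAt (fun ω : ℝ => G ω a b) (G' a b) ω₁) :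
    Complex.I • ((G ω₁)ᴴ * G') = Γ₁ := by
  classical
  set M : Matrix (Fin m) (Fin m) ℂ := Γ₁⁻¹ * (1 - A₁ᴴ) with hMdef
  have hz0 : z₁ ≠ 0 := by rw [hz₁]; exact Complex.exp_ne_zero _
  have h1z : (1 : ℂ) + z₁ ≠ 0 := by
    intro h
    exact hz₁' (by linear_combination h)
  set c : ℂ := z₁ / (1 + z₁) with hcdef
  have hc : c * (1 + z₁) = z₁ := div_mul_cancel₀ _ h1z
  -- the exponential path
  set g : ℝ → ℂ := fun ω => Complex.exp (Complex.I * (ω : ℂ)) with hgdef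
  have hgz : g ω₁ = z₁ := hz₁.symm
  have hgd : HasDerivAt g (Complex.I * z₁) ω₁ := by
    have h1 : HasDerivAt (fun z : ℂ => Complex.exp (Complex.I * z))
        (Complex.exp (Complex.I * (ω₁ : ℂ)) * (Complex.I * 1)) (ω₁ : ℂ) :=
      ((hasDerivAt_id (ω₁ : ℂ)).const_mul Complex.I).cexp
    have h2 := h1.comp_ofReal
    simpa [← hz₁, mul_comm] using h2
  -- D and N at z₁, unit facts
  have hDz₁ : D z₁ = z₁ • M := by rw [hD]; simp [hc]
  have hNz₁ : N z₁ = z₁ • (A₁ * M) := by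
    rw [hN]
    simp only [sub_self, zero_smul, zero_add, hc]
    rw [Matrix.mul_assoc, ← hMdef]
  have hU : IsUnit (z₁ • M) := by
    have hself := hDinv.self_of_nhds
    rwa [← hz₁, hDz₁] at hself
  have hMdet : IsUnit M.det := by
    have h := (Matrix.isUnit_iff_isUnit_det _).mp hU
    rw [Matrix.det_smul] at h
    exact isUnit_of_mul_isUnit_right h
  have hMM : M * M⁻¹ = 1 := Matrix.mul_nonsing_inv _ hMdet
  have hsmulinv : (z₁ • M)⁻¹ = z₁⁻¹ • M⁻¹ := by
    apply Matrix.inv_eq_right_inv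
    rw [Matrix.smul_mul, Matrix.mul_smul, hMM, smul_smul, mul_inv_cancel₀ hz0, one_smul]
  -- derivatives of N ∘ g and D ∘ g
  have hNd : HasDerivAt (fun ω => N (g ω))
      ((Complex.I * z₁) • (1 : Matrix (Fin m) (Fin m) ℂ)
        + (c * (Complex.I * z₁)) • (A₁ * M)) ω₁ := by
    have h1 : HasDerivAt (fun ω => (g ω - z₁)) (Complex.I * z₁) ω₁ := hgd.sub_const _
    have h2 : HasDerivAt (fun ω => (c * (1 + g ω))) (c * (Complex.I * z₁)) ω₁ :=
      ((hgd.const_add 1).const_mul c)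
    have h3 := (h1.smul_const (1 : Matrix (Fin m) (Fin m) ℂ)).add
      (h2.smul_const (A₁ * Γ₁⁻¹ * (1 - A₁ᴴ)))
    have h4 : A₁ * Γ₁⁻¹ * (1 - A₁ᴴ) = A₁ * M := by rw [Matrix.mul_assoc, ← hMdef]
    rw [h4] at h3
    simp only [hN, h4]
    exact h3
  have hDd : HasDerivAt (fun ω => D (g ω))
      ((Complex.I * z₁) • (1 : Matrix (Fin m) (Fin m) ℂ)
        + (c * (Complex.I * z₁)) • M) ω₁ := by
    have h1 : HasDerivAt (fun ω => (g ω - z₁)) (Complex.I * z₁) ω₁ := hgd.sub_const _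
    have h2 : HasDerivAt (fun ω => (c * (1 + g ω))) (c * (Complex.I * z₁)) ω₁ :=
      ((hgd.const_add 1).const_mul c)
    have h3 := (h1.smul_const (1 : Matrix (Fin m) (Fin m) ℂ)).add (h2.smul_const M)
    simp only [hD]
    exact h3
  -- derivative of the inverse
  set u : (Matrix (Fin m) (Fin m) ℂ)ˣ := hU.unit with hudef
  have hu : (u : Matrix (Fin m) (Fin m) ℂ) = z₁ • M := hU.unit_spec
  have huinv : ((u⁻¹ : (Matrix (Fin m) (Fin m) ℂ)ˣ) : Matrix (Fin m) (Fin m) ℂ)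
      = z₁⁻¹ • M⁻¹ := by
    rw [← Ring.inverse_unit u, hu, ← Matrix.nonsing_inv_eq_ringInverse, hsmulinv]
  set Dd : Matrix (Fin m) (Fin m) ℂ :=
    (Complex.I * z₁) • (1 : Matrix (Fin m) (Fin m) ℂ) + (c * (Complex.I * z₁)) • M with hDddef
  have hinvd : HasDerivAt (fun ω => Ring.inverse (D (g ω)))
      (-((z₁⁻¹ • M⁻¹) * Dd * (z₁⁻¹ • M⁻¹))) ω₁ := by
    have hfd : HasFDerivAt (Ring.inverse : Matrix (Fin m) (Fin m) ℂ → Matrix (Fin m) (Fin m) ℂ)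
        (-(ContinuousLinearMap.mulLeftRight ℝ _ ((u⁻¹ : _ˣ) : Matrix (Fin m) (Fin m) ℂ)
          ((u⁻¹ : _ˣ) : Matrix (Fin m) (Fin m) ℂ))) (D (g ω₁)) := by
      rw [hgz, hDz₁, ← hu]
      exact hasFDerivAt_ringInverse u
    have h := hfd.comp_hasDerivAt ω₁ hDd
    simp [huinv, Function.comp_def, ContinuousLinearMap.mulLeftRight_apply] at h ⊢
    exact h
  -- derivative of G
  set Gd : Matrix (Fin m) (Fin m) ℂ :=
    ((Complex.I * z₁) • (1 : Matrix (Fin m) (Fin m) ℂ)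
        + (c * (Complex.I * z₁)) • (A₁ * M)) * (z₁⁻¹ • M⁻¹)
      + (z₁ • (A₁ * M)) * (-((z₁⁻¹ • M⁻¹) * Dd * (z₁⁻¹ • M⁻¹))) with hGddef
  have hGfun : G = fun ω => N (g ω) * Ring.inverse (D (g ω)) := by
    funext ω
    rw [hG ω, Matrix.nonsing_inv_eq_ringInverse]
  have hRinv : Ring.inverse (D (g ω₁)) = z₁⁻¹ • M⁻¹ := by
    rw [hgz, hDz₁, ← Matrix.nonsing_inv_eq_ringInverse, hsmulinv]
  have hGd : HasDerivAt G Gd ω₁ := by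
    rw [hGfun]
    have h := hNd.mul hinvd
    rw [hRinv, hgz, hNz₁] at h
    exact h
  -- identify G' with Gd entrywise
  have hG'eq : G' = Gd := by
    ext a b
    refine (hG' a b).unique ?_
    let L : Matrix (Fin m) (Fin m) ℂ →L[ℝ] ℂ :=
      LinearMap.toContinuousLinearMap
        { toFun := fun X => X a b
          map_add' := fun _ _ => rfl
          map_smul' := fun _ _ => rfl }
    have h := L.hasFDerivAt.comp_hasDerivAt ω₁ hGd
    have hL : ∀ X, L X = X a b := fun _ => rfl
    exact h
  -- value of G at ω₁
  have hG₀ : G ω₁ = A₁ := by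
    rw [hG, ← hz₁, hDz₁, hNz₁, hsmulinv, Matrix.smul_mul, Matrix.mul_smul, smul_smul,
      mul_inv_cancel₀ hz0, one_smul, Matrix.mul_assoc, hMM, Matrix.mul_one]
  -- simplify Gd
  have hGd' : Gd = Complex.I • ((1 - A₁) * M⁻¹) := by
    rw [hGddef, hDddef]
    exact aux_alg m z₁ c Complex.I hz0 A₁ M M⁻¹ hMM
  -- final assembly
  have hΓdet : IsUnit Γ₁.det := (Matrix.isUnit_iff_isUnit_det _).mp hΓ.isUnit
  have h1A : IsUnit (1 - A₁ᴴ).det := by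
    have h := hMdet
    rw [hMdef, Matrix.det_mul] at h
    exact isUnit_of_mul_isUnit_right h
  have hMinv : M⁻¹ = (1 - A₁ᴴ)⁻¹ * Γ₁ := by
    rw [hMdef, Matrix.mul_inv_rev, Matrix.nonsing_inv_nonsing_inv _ hΓdet]
  have hfinal : (1 - A₁ᴴ) * M⁻¹ = Γ₁ := by
    rw [hMinv, ← Matrix.mul_assoc, Matrix.mul_nonsing_inv _ h1A, Matrix.one_mul]
  rw [hG₀, hG'eq, hGd', Matrix.mul_smul, smul_smul, Complex.I_mul_I]
  have hsub : A₁ᴴ * ((1 - A₁) * M⁻¹) = -((1 - A₁ᴴ) * M⁻¹) := by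
    rw [← Matrix.mul_assoc, Matrix.mul_sub, Matrix.mul_one, hA, ← Matrix.neg_mul, neg_sub]
  rw [hsub, smul_neg, neg_smul, one_smul, neg_neg, hfinal]
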